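/- Let ξ₁, …, ξₙ be real random variables (not necessarily independent) such that for all 1 ≤ ℓ₁ ≤ ℓ₂ ≤ n, E[(Σ_{j=ℓ₁}^{ℓ₂} ξ_j)²] ≤ C (ℓ₂ - ℓ₁ + 1) for some constant C. Then E[(max_{1 ≤ k ≤ n} |Σ_{j=1}^k ξ_j|)²] ≤ C' C n (log 2n)² for an absolute constant C'. -/

import Mathlib

set_option maxHeartbeats 1000000

open MeasureTheory Filter

section MenshovHelpers

variable {Ω : Type} {mΩ : MeasurableSpace Ω} {μ : Measure Ω}

lemma my_memℒp_sup' {ι : Type} {s : Finset ι} (hs : s.Nonempty) {f : ι → Ω → ℝ}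
    (hf : ∀ i ∈ s, MemLp (f i) 2 μ) :
    MemLp (fun ω => s.sup' hs (fun i => f i ω)) 2 μ := by
  induction hs using Finset.Nonempty.cons_induction with
  | singleton a =>
    simp only [Finset.sup'_singleton]
    exact hf a (by simp)
  | cons a s ha hs ih =>
    simp only [Finset.sup'_cons hs]
    exact (hf a (by simp)).sup (ih fun i hi => hf i (Finset.mem_cons_of_mem hi))

lemma my_integral_mul_le {f g : Ω → ℝ} (hf : MemLp f 2 μ) (hg : MemLp g 2 μ) :
    ∫ ω, f ω * g ω ∂μ ≤ Real.sqrt (∫ ω, f ω ^ 2 ∂μ) * Real.sqrt (∫ ω, g ω ^ 2 ∂μ) := by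
  set F : Lp ℝ 2 μ := hf.toLp f
  set G : Lp ℝ 2 μ := hg.toLp g
  have hFf : (F : Ω → ℝ) =ᵐ[μ] f := hf.coeFn_toLp
  have hGg : (G : Ω → ℝ) =ᵐ[μ] g := hg.coeFn_toLp
  have hinner : @inner ℝ _ _ F G = ∫ ω, f ω * g ω ∂μ := by
    rw [L2.inner_def]
    exact integral_congr_ae ((hFf.mul hGg).mono fun ω h => by simpa [mul_comm] using h)
  have hnF : ‖F‖ = Real.sqrt (∫ ω, f ω ^ 2 ∂μ) := by
    have : @inner ℝ _ _ F F = ∫ ω, f ω ^ 2 ∂μ := by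
      rw [L2.inner_def]
      exact integral_congr_ae ((hFf.mul hFf).mono fun ω h => by simp only [RCLike.inner_apply, conj_trivial]; rw [sq]; exact h)
    rw [← this, real_inner_self_eq_norm_sq, Real.sqrt_sq (norm_nonneg _)]
  have hnG : ‖G‖ = Real.sqrt (∫ ω, g ω ^ 2 ∂μ) := by
    have : @inner ℝ _ _ G G = ∫ ω, g ω ^ 2 ∂μ := by
      rw [L2.inner_def]
      exact integral_congr_ae ((hGg.mul hGg).mono fun ω h => by simp only [RCLike.inner_apply, conj_trivial]; rw [sq]; exact h)
    rw [← this, real_inner_self_eq_norm_sq, Real.sqrt_sq (norm_nonneg _)]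
  calc ∫ ω, f ω * g ω ∂μ = @inner ℝ _ _ F G := hinner.symm
    _ ≤ ‖F‖ * ‖G‖ := real_inner_le_norm F G
    _ = _ := by rw [hnF, hnG]

lemma my_integrable_mul {f g : Ω → ℝ} (hf : MemLp f 2 μ) (hg : MemLp g 2 μ) :
    Integrable (fun ω => f ω * g ω) μ := by
  have h := L2.integrable_inner (𝕜 := ℝ) (hf.toLp f) (hg.toLp g)
  refine h.congr ((hf.coeFn_toLp.mul hg.coeFn_toLp).mono fun ω h => ?_)
  simpa [mul_comm] using h

lemma my_integral_add_sq_le {f g : Ω → ℝ} (hf : MemLp f 2 μ) (hg : MemLp g 2 μ) :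
    ∫ ω, (f ω + g ω) ^ 2 ∂μ ≤
      (Real.sqrt (∫ ω, f ω ^ 2 ∂μ) + Real.sqrt (∫ ω, g ω ^ 2 ∂μ)) ^ 2 := by
  have hfg := my_integrable_mul hf hg
  have h1 : ∫ ω, (f ω + g ω) ^ 2 ∂μ
      = (∫ ω, f ω ^ 2 ∂μ) + 2 * (∫ ω, f ω * g ω ∂μ) + ∫ ω, g ω ^ 2 ∂μ := by
    have he : ∀ ω, (f ω + g ω) ^ 2 = f ω ^ 2 + 2 * (f ω * g ω) + g ω ^ 2 := fun ω => by ring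
    simp_rw [he]
    have i2 : Integrable (fun ω => 2 * (f ω * g ω)) μ := hfg.const_mul 2
    have i1 : Integrable (fun ω => f ω ^ 2 + 2 * (f ω * g ω)) μ := hf.integrable_sq.add i2
    rw [integral_add i1 hg.integrable_sq, integral_add hf.integrable_sq i2, MeasureTheory.integral_const_mul]
  have ha : 0 ≤ ∫ ω, f ω ^ 2 ∂μ := integral_nonneg fun ω => sq_nonneg _
  have hb : 0 ≤ ∫ ω, g ω ^ 2 ∂μ := integral_nonneg fun ω => sq_nonneg _
  have hcs := my_integral_mul_le hf hg
  have h2 : (Real.sqrt (∫ ω, f ω ^ 2 ∂μ) + Real.sqrt (∫ ω, g ω ^ 2 ∂μ)) ^ 2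
      = (∫ ω, f ω ^ 2 ∂μ) + 2 * (Real.sqrt (∫ ω, f ω ^ 2 ∂μ) * Real.sqrt (∫ ω, g ω ^ 2 ∂μ))
        + ∫ ω, g ω ^ 2 ∂μ := by
    rw [add_sq, Real.sq_sqrt ha, Real.sq_sqrt hb]; ring
  linarith

lemma my_sum_shift {M : Type*} [AddCommMonoid M] (f : ℕ → M) (a b m : ℕ) :
    ∑ j ∈ Finset.Icc (a + m) (b + m), f j = ∑ j ∈ Finset.Icc a b, f (j + m) := by
  rw [← Finset.map_add_right_Icc, Finset.sum_map]
  rfl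

lemma menshov_key (p : ℕ) :
    ∀ (Ω : Type) (mΩ : MeasurableSpace Ω) (μ : Measure Ω), IsProbabilityMeasure μ →
    ∀ (n : ℕ), 1 ≤ n → n ≤ 2 ^ p →
    ∀ (ξ : ℕ → Ω → ℝ), (∀ j, MemLp (ξ j) 2 μ) →
    ∀ C : ℝ, 0 ≤ C →
    (∀ ℓ₁ ℓ₂ : ℕ, 1 ≤ ℓ₁ → ℓ₁ ≤ ℓ₂ → ℓ₂ ≤ n →
      ∫ ω, (∑ j ∈ Finset.Icc ℓ₁ ℓ₂, ξ j ω) ^ 2 ∂μ ≤ C * (ℓ₂ - ℓ₁ + 1)) →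
    ∀ (hne : (Finset.Icc 1 n).Nonempty),
    ∫ ω, ((Finset.Icc 1 n).sup' hne fun k => |∑ j ∈ Finset.Icc 1 k, ξ j ω|) ^ 2 ∂μ
      ≤ C * n * (p + 1) ^ 2 := by
  induction p with
  | zero =>
    intro Ω mΩ μ hμ n hn1 hn2 ξ hξ C hC hyp hne
    have hn : n = 1 := le_antisymm (by simpa using hn2) hn1
    subst hn
    have h := hyp 1 1 le_rfl le_rfl le_rfl
    simp only [Finset.Icc_self, Finset.sup'_singleton, sq_abs]
    norm_num at h ⊢
    linarith
  | succ p ih =>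
    intro Ω mΩ μ hμ n hn1 hn2 ξ hξ C hC hyp hne
    by_cases hsmall : n ≤ 2 ^ p
    · have h := ih Ω mΩ μ hμ n hn1 hsmall ξ hξ C hC hyp hne
      have hCn : (0:ℝ) ≤ C * n := mul_nonneg hC (Nat.cast_nonneg n)
      refine h.trans ?_
      push_cast
      nlinarith [hCn, Nat.cast_nonneg (α := ℝ) p]
    · push_neg at hsmall
      set m : ℕ := (n + 1) / 2 with hm
      have h2P : 2 ^ (p + 1) = 2 * 2 ^ p := by rw [pow_succ]; ring
      have hP1 : 1 ≤ 2 ^ p := Nat.one_le_two_pow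
      have hm1 : 1 ≤ m := by omega
      have hmn : m < n := by omega
      have hm2p : m ≤ 2 ^ p := by omega
      have hnm2p : n - m ≤ 2 ^ p := by omega
      have hnm1 : 1 ≤ n - m := by omega
      have hneA : (Finset.Icc 1 m).Nonempty := Finset.nonempty_Icc.mpr hm1
      have hneB : (Finset.Icc 1 (n - m)).Nonempty := Finset.nonempty_Icc.mpr hnm1
      -- partial sums are in L²
      have hS : ∀ k, MemLp (fun ω => ∑ j ∈ Finset.Icc 1 k, ξ j ω) 2 μ :=
        fun k => memLp_finset_sum (Finset.Icc 1 k) (fun j _ => hξ j)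
      have hS' : ∀ k, MemLp (fun ω => ∑ j ∈ Finset.Icc 1 k, ξ (j + m) ω) 2 μ :=
        fun k => memLp_finset_sum (Finset.Icc 1 k) (fun j _ => hξ (j + m))
      -- definitions
      set A : Ω → ℝ := fun ω => (Finset.Icc 1 m).sup' hneA fun k => |∑ j ∈ Finset.Icc 1 k, ξ j ω| with hA
      set B : Ω → ℝ := fun ω => (Finset.Icc 1 (n - m)).sup' hneB fun k => |∑ j ∈ Finset.Icc 1 k, ξ (j + m) ω| with hB
      -- IH applied to the first half
      have hA2 : ∫ ω, A ω ^ 2 ∂μ ≤ C * m * (p + 1) ^ 2 := by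
        exact ih Ω mΩ μ hμ m hm1 hm2p ξ hξ C hC
          (fun ℓ₁ ℓ₂ h1 h12 h2 => hyp ℓ₁ ℓ₂ h1 h12 (h2.trans hmn.le)) hneA
      -- IH applied to the shifted second half
      have hB2 : ∫ ω, B ω ^ 2 ∂μ ≤ C * (n - m : ℕ) * (p + 1) ^ 2 := by
        refine ih Ω mΩ μ hμ (n - m) hnm1 hnm2p (fun j => ξ (j + m)) (fun j => hξ (j + m)) C hC
          ?_ hneB
        intro ℓ₁ ℓ₂ h1 h12 h2
        have h := hyp (ℓ₁ + m) (ℓ₂ + m) (by omega) (by omega) (by omega)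
        simp only [my_sum_shift] at h
        refine h.trans (le_of_eq ?_)
        push_cast
        ring
      have hSm : ∫ ω, (∑ j ∈ Finset.Icc 1 m, ξ j ω) ^ 2 ∂μ ≤ C * m := by
        have h := hyp 1 m le_rfl hm1 hmn.le
        refine h.trans (le_of_eq ?_)
        push_cast
        ring
      -- pointwise bound
      have hB0 : ∀ ω, 0 ≤ B ω := fun ω =>
        le_trans (abs_nonneg (∑ j ∈ Finset.Icc 1 1, ξ (j + m) ω))
          (Finset.le_sup' (fun k => |∑ j ∈ Finset.Icc 1 k, ξ (j + m) ω|)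
            (Finset.mem_Icc.mpr ⟨le_rfl, hnm1⟩))
      have hA0 : ∀ ω, 0 ≤ A ω := fun ω =>
        le_trans (abs_nonneg (∑ j ∈ Finset.Icc 1 1, ξ j ω))
          (Finset.le_sup' (fun k => |∑ j ∈ Finset.Icc 1 k, ξ j ω|)
            (Finset.mem_Icc.mpr ⟨le_rfl, hm1⟩))
      have key : ∀ ω, ((Finset.Icc 1 n).sup' hne fun k => |∑ j ∈ Finset.Icc 1 k, ξ j ω|)
          ≤ max (A ω) (|∑ j ∈ Finset.Icc 1 m, ξ j ω| + B ω) := by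
        intro ω
        apply Finset.sup'_le
        intro k hk
        rw [Finset.mem_Icc] at hk
        by_cases hk' : k ≤ m
        · exact le_max_of_le_left (Finset.le_sup' (fun k => |∑ j ∈ Finset.Icc 1 k, ξ j ω|)
            (Finset.mem_Icc.mpr ⟨hk.1, hk'⟩))
        · push_neg at hk'
          have hsplit : (∑ j ∈ Finset.Icc 1 m, ξ j ω) + ∑ j ∈ Finset.Ioc m k, ξ j ω
              = ∑ j ∈ Finset.Icc 1 k, ξ j ω := by
            rw [show Finset.Icc 1 m = Finset.Ioc 0 m from Finset.Icc_add_one_left_eq_Ioc 0 m,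
              show Finset.Icc 1 k = Finset.Ioc 0 k from Finset.Icc_add_one_left_eq_Ioc 0 k]
            exact Finset.sum_Ioc_consecutive _ (Nat.zero_le m) hk'.le
          have hshift : ∑ j ∈ Finset.Ioc m k, ξ j ω = ∑ j ∈ Finset.Icc 1 (k - m), ξ (j + m) ω := by
            have h := my_sum_shift (fun j => ξ j ω) 1 (k - m) m
            rw [show 1 + m = m + 1 by ring, show k - m + m = k by omega] at h
            rw [← h, Finset.Icc_add_one_left_eq_Ioc]
          have hle : |∑ j ∈ Finset.Icc 1 (k - m), ξ (j + m) ω| ≤ B ω :=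
            Finset.le_sup' (fun k => |∑ j ∈ Finset.Icc 1 k, ξ (j + m) ω|)
              (Finset.mem_Icc.mpr ⟨by omega, by omega⟩)
          calc |∑ j ∈ Finset.Icc 1 k, ξ j ω|
              = |(∑ j ∈ Finset.Icc 1 m, ξ j ω) + ∑ j ∈ Finset.Ioc m k, ξ j ω| := by rw [hsplit]
            _ ≤ |∑ j ∈ Finset.Icc 1 m, ξ j ω| + |∑ j ∈ Finset.Ioc m k, ξ j ω| := abs_add_le _ _
            _ ≤ |∑ j ∈ Finset.Icc 1 m, ξ j ω| + B ω := by rw [hshift]; exact add_le_add le_rfl hle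
            _ ≤ max (A ω) (|∑ j ∈ Finset.Icc 1 m, ξ j ω| + B ω) := le_max_right _ _
      have hMsq : ∀ ω, ((Finset.Icc 1 n).sup' hne fun k => |∑ j ∈ Finset.Icc 1 k, ξ j ω|) ^ 2
          ≤ A ω ^ 2 + (|∑ j ∈ Finset.Icc 1 m, ξ j ω| + B ω) ^ 2 := by
        intro ω
        have hM0 : 0 ≤ (Finset.Icc 1 n).sup' hne fun k => |∑ j ∈ Finset.Icc 1 k, ξ j ω| :=
          le_trans (abs_nonneg (∑ j ∈ Finset.Icc 1 1, ξ j ω))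
            (Finset.le_sup' (fun k => |∑ j ∈ Finset.Icc 1 k, ξ j ω|)
              (Finset.mem_Icc.mpr ⟨le_rfl, hn1⟩))
        have hX0 : 0 ≤ |∑ j ∈ Finset.Icc 1 m, ξ j ω| + B ω :=
          add_nonneg (abs_nonneg _) (hB0 ω)
        rcases le_total (A ω) (|∑ j ∈ Finset.Icc 1 m, ξ j ω| + B ω) with h | h
        · have h2 := (key ω).trans (max_le h le_rfl)
          nlinarith [pow_le_pow_left₀ hM0 h2 2, sq_nonneg (A ω)]
        · have h2 := (key ω).trans (max_le le_rfl h)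
          nlinarith [pow_le_pow_left₀ hM0 h2 2, sq_nonneg (|∑ j ∈ Finset.Icc 1 m, ξ j ω| + B ω)]
      -- integral step
      have hMemA : MemLp A 2 μ := my_memℒp_sup' hneA (fun k _ => (hS k).abs)
      have hMemB : MemLp B 2 μ := my_memℒp_sup' hneB (fun k _ => (hS' k).abs)
      have hMemSma : MemLp (fun ω => |∑ j ∈ Finset.Icc 1 m, ξ j ω|) 2 μ := (hS m).abs
      have hMemX : MemLp (fun ω => |∑ j ∈ Finset.Icc 1 m, ξ j ω| + B ω) 2 μ := hMemSma.add hMemB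
      have hint : Integrable (fun ω => A ω ^ 2 + (|∑ j ∈ Finset.Icc 1 m, ξ j ω| + B ω) ^ 2) μ :=
        hMemA.integrable_sq.add hMemX.integrable_sq
      have step1 : ∫ ω, ((Finset.Icc 1 n).sup' hne fun k => |∑ j ∈ Finset.Icc 1 k, ξ j ω|) ^ 2 ∂μ
          ≤ ∫ ω, (A ω ^ 2 + (|∑ j ∈ Finset.Icc 1 m, ξ j ω| + B ω) ^ 2) ∂μ :=
        integral_mono_of_nonneg (Filter.Eventually.of_forall fun ω => sq_nonneg _) hint
          (Filter.Eventually.of_forall hMsq)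
      rw [integral_add hMemA.integrable_sq hMemX.integrable_sq] at step1
      have step2 : ∫ ω, (|∑ j ∈ Finset.Icc 1 m, ξ j ω| + B ω) ^ 2 ∂μ
          ≤ (Real.sqrt (∫ ω, (∑ j ∈ Finset.Icc 1 m, ξ j ω) ^ 2 ∂μ)
              + Real.sqrt (∫ ω, B ω ^ 2 ∂μ)) ^ 2 := by
        have h := my_integral_add_sq_le hMemSma hMemB
        simpa only [sq_abs] using h
      -- numerics
      set q : ℝ := (p : ℝ) + 1 with hq
      have hq0 : 0 ≤ q := by positivity
      have hd : ((n - m : ℕ) : ℝ) = (n : ℝ) - m := by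
        rw [Nat.cast_sub hmn.le]
      have hdn : ((n : ℝ) - m) ≤ n := by
        have : (0:ℝ) ≤ m := Nat.cast_nonneg m
        linarith
      have hd0 : (0:ℝ) ≤ (n : ℝ) - m := by
        have := Nat.cast_le (α := ℝ).mpr hmn.le
        linarith
      have hn0 : (0:ℝ) ≤ (n:ℝ) := Nat.cast_nonneg n
      have hsa0 : 0 ≤ ∫ ω, (∑ j ∈ Finset.Icc 1 m, ξ j ω) ^ 2 ∂μ := integral_nonneg fun ω => sq_nonneg _
      have hb0 : 0 ≤ ∫ ω, B ω ^ 2 ∂μ := integral_nonneg fun ω => sq_nonneg _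
      have hCm_le : C * m ≤ C * n :=
        mul_le_mul_of_nonneg_left (Nat.cast_le.mpr hmn.le) hC
      have hsqa : Real.sqrt (∫ ω, (∑ j ∈ Finset.Icc 1 m, ξ j ω) ^ 2 ∂μ) ≤ Real.sqrt (C * n) :=
        Real.sqrt_le_sqrt (hSm.trans hCm_le)
      have hsqb : Real.sqrt (∫ ω, B ω ^ 2 ∂μ) ≤ Real.sqrt (C * ((n:ℝ) - m) * q ^ 2) := by
        apply Real.sqrt_le_sqrt
        refine hB2.trans (le_of_eq ?_)
        rw [hd]
      set u : ℝ := Real.sqrt (C * n) with hu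
      set v : ℝ := Real.sqrt (C * ((n:ℝ) - m) * q ^ 2) with hv
      have hu0 : 0 ≤ u := Real.sqrt_nonneg _
      have hv0 : 0 ≤ v := Real.sqrt_nonneg _
      have hu2 : u ^ 2 = C * n := Real.sq_sqrt (by positivity)
      have hv2 : v ^ 2 = C * ((n:ℝ) - m) * q ^ 2 := Real.sq_sqrt (by positivity)
      have huv : u * v ≤ C * n * q := by
        rw [hu, hv, ← Real.sqrt_mul (by positivity)]
        have h' : (C ^ 2 * q ^ 2 * (n:ℝ)) * ((n:ℝ) - m) ≤ (C ^ 2 * q ^ 2 * (n:ℝ)) * n :=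
          mul_le_mul_of_nonneg_left hdn (by positivity)
        have harg : C * n * (C * ((n:ℝ) - m) * q ^ 2) ≤ (C * n * q) ^ 2 := by nlinarith [h']
        calc Real.sqrt (C * n * (C * ((n:ℝ) - m) * q ^ 2)) ≤ Real.sqrt ((C * n * q) ^ 2) :=
              Real.sqrt_le_sqrt harg
          _ = C * n * q := Real.sqrt_sq (by positivity)
      have step3 : (Real.sqrt (∫ ω, (∑ j ∈ Finset.Icc 1 m, ξ j ω) ^ 2 ∂μ)
          + Real.sqrt (∫ ω, B ω ^ 2 ∂μ)) ^ 2 ≤ (u + v) ^ 2 := by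
        apply pow_le_pow_left₀ (add_nonneg (Real.sqrt_nonneg _) (Real.sqrt_nonneg _))
        exact add_le_add hsqa hsqb
      have hexp : (u + v) ^ 2 ≤ C * n + 2 * (C * n * q) + C * ((n:ℝ) - m) * q ^ 2 := by
        nlinarith [hu2, hv2, huv]
      have hmR : (m : ℝ) ≤ n := Nat.cast_le.mpr hmn.le
      calc ∫ ω, ((Finset.Icc 1 n).sup' hne fun k => |∑ j ∈ Finset.Icc 1 k, ξ j ω|) ^ 2 ∂μ
          ≤ (∫ ω, A ω ^ 2 ∂μ) + ∫ ω, (|∑ j ∈ Finset.Icc 1 m, ξ j ω| + B ω) ^ 2 ∂μ := step1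
        _ ≤ C * m * q ^ 2 + (C * n + 2 * (C * n * q) + C * ((n:ℝ) - m) * q ^ 2) := by
            refine add_le_add (hA2.trans (le_of_eq (by rw [hq]))) ?_
            exact step2.trans (step3.trans hexp)
        _ = C * n * (q + 1) ^ 2 := by ring
        _ = C * n * ((p:ℝ) + 1 + 1) ^ 2 := by rw [hq]
        _ = C * ↑n * (↑(p + 1) + 1) ^ 2 := by push_cast; ring


end MenshovHelpers

/-- Rademacher–Menshov / Menshov maximal inequality: there is an absolute
constant `C'` such that for any square-integrable random variables `ξ₁,…,ξₙ` with
`E[(Σ_{j=ℓ₁}^{ℓ₂} ξ_j)²] ≤ C (ℓ₂-ℓ₁+1)` for all `1 ≤ ℓ₁ ≤ ℓ₂ ≤ n`, one has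
`E[(max_{1 ≤ k ≤ n} |Σ_{j=1}^k ξ_j|)²] ≤ C' C n (log 2n)²`. -/
theorem menshov_maximal_inequality :
    ∃ C' : ℝ, 0 < C' ∧
      ∀ (Ω : Type) (_ : MeasurableSpace Ω) (μ : Measure Ω), IsProbabilityMeasure μ →
      ∀ (n : ℕ) (hn : 1 ≤ n),
      ∀ (ξ : ℕ → Ω → ℝ), (∀ j, MeasureTheory.MemLp (ξ j) 2 μ) →
      ∀ C : ℝ, 0 ≤ C →
      (∀ ℓ₁ ℓ₂ : ℕ, 1 ≤ ℓ₁ → ℓ₁ ≤ ℓ₂ → ℓ₂ ≤ n →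
        ∫ ω, (∑ j ∈ Finset.Icc ℓ₁ ℓ₂, ξ j ω) ^ 2 ∂μ ≤ C * (ℓ₂ - ℓ₁ + 1)) →
      ∫ ω, ((Finset.Icc 1 n).sup' (Finset.nonempty_Icc.mpr hn) fun k => |∑ j ∈ Finset.Icc 1 k, ξ j ω|) ^ 2 ∂μ
        ≤ C' * C * n * (Real.log (2 * n)) ^ 2 := by
  refine ⟨9, by norm_num, ?_⟩
  intro Ω mΩ μ hμ n hn ξ hξ C hC hyp
  set p : ℕ := Nat.clog 2 n with hp
  have hnp : n ≤ 2 ^ p := Nat.le_pow_clog one_lt_two n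
  have hkey := menshov_key p Ω mΩ μ hμ n hn hnp ξ hξ C hC hyp (Finset.nonempty_Icc.mpr hn)
  have hl2 : (0.6931471803 : ℝ) < Real.log 2 := Real.log_two_gt_d9
  have hn0 : (0:ℝ) < (n:ℝ) := by exact_mod_cast hn
  have hlog2n : Real.log (2 * n) = Real.log 2 + Real.log n :=
    Real.log_mul (by norm_num) (ne_of_gt hn0)
  have hlog : ((p:ℝ) + 1) ≤ 3 * Real.log (2 * n) := by
    rcases eq_or_lt_of_le hn with h1 | h2
    · -- n = 1
      have hn1 : n = 1 := h1.symm
      subst hn1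
      have : p = 0 := by rw [hp]; exact Nat.clog_one_right 2
      rw [this, hlog2n]
      simp only [Nat.cast_zero, Nat.cast_one, Real.log_one]
      linarith
    · -- 2 ≤ n
      have h2n : 2 ≤ n := h2
      have hp1 : 1 ≤ p := Nat.clog_pos one_lt_two h2n
      have hpow : 2 ^ (p - 1) < n := Nat.pow_pred_clog_lt_self one_lt_two h2n
      have hpowR : (2:ℝ) ^ (p - 1) < (n:ℝ) := by exact_mod_cast hpow
      have hlogpow : ((p - 1 : ℕ) : ℝ) * Real.log 2 < Real.log n := by
        rw [← Real.log_pow]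
        exact Real.log_lt_log (by positivity) hpowR
      have hcast : ((p - 1 : ℕ) : ℝ) = (p:ℝ) - 1 := by
        rw [Nat.cast_sub hp1, Nat.cast_one]
      rw [hcast] at hlogpow
      have hln : Real.log 2 ≤ Real.log n :=
        Real.log_le_log (by norm_num) (by exact_mod_cast h2n)
      rw [hlog2n]
      nlinarith [hlogpow, hl2, hln,
        mul_nonneg (sub_nonneg.mpr hln) (by nlinarith [hl2] : (0:ℝ) ≤ 3 * Real.log 2 - 1)]
  have hL0 : 0 ≤ Real.log (2 * n) := by nlinarith [hlog, Nat.cast_nonneg (α := ℝ) p]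
  have hsq : ((p:ℝ) + 1) ^ 2 ≤ (3 * Real.log (2 * n)) ^ 2 :=
    pow_le_pow_left₀ (by positivity) hlog 2
  have hCn : (0:ℝ) ≤ C * n := mul_nonneg hC (Nat.cast_nonneg n)
  calc ∫ ω, ((Finset.Icc 1 n).sup' (Finset.nonempty_Icc.mpr hn) fun k => |∑ j ∈ Finset.Icc 1 k, ξ j ω|) ^ 2 ∂μ
      ≤ C * n * ((p:ℝ) + 1) ^ 2 := hkey
    _ ≤ C * n * (3 * Real.log (2 * n)) ^ 2 := mul_le_mul_of_nonneg_left hsq hCn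
    _ = 9 * C * n * (Real.log (2 * n)) ^ 2 := by ring
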